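/- arXiv:1706.05755 — 3 statements merged into one kernel-verified Lean document; each statement's English description precedes it below -/
import Mathlib

section
/- Let (X, M) be a multi-normed vector lattice with the Lebesgue property, {e_γ}_{γ∈Γ} a maximal orthogonal system, B_γ the band generated by e_γ with band projection P_γ. Then a net x_α um-converges to 0 in X if and only if P_γ x_α um-converges to 0 in B_γ for every γ ∈ Γ. -/
open Filter Topology

/-- Let `(X, M)` be an MNVL with the Lebesgue property, `{e_γ}` a maximal
orthogonal system, and for each `γ` let `P γ` be the band projection onto the band `B_γ`
generated by `e_γ` (characterized by `P γ x = sup_n (x ⊓ n e_γ)` for `x ≥ 0`).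
Then `x_α` um-converges to `0` in `X` iff `P γ x_α` um-converges to `0` in `B_γ`
(`= range (P γ)`) for all `γ`. -/
theorem stmt17 {X : Type u} [AddCommGroup X] [Lattice X]
    [CovariantClass X X (· + ·) (· ≤ ·)] [Module ℝ X]
    {Λ : Type*} (m : Λ → X → ℝ)
    (hadd : ∀ l (x y : X), m l (x + y) ≤ m l x + m l y)
    (hsmul : ∀ l (c : ℝ) (x : X), m l (c • x) = |c| * m l x)
    (hmono : ∀ l (x y : X), |x| ≤ |y| → m l x ≤ m l y)
    (hsep : ∀ x : X, (∀ l, m l x = 0) → x = 0)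
    (hdir : ∀ l₁ l₂, ∃ l₃, ∀ x : X, m l₁ x ≤ m l₃ x ∧ m l₂ x ≤ m l₃ x)
    -- Lebesgue property
    (hLeb : ∀ (α : Type u) [Preorder α] [Nonempty α] [IsDirected α (· ≤ ·)] (x : α → X),
        Antitone x → IsGLB (Set.range x) 0 →
        ∀ l, Tendsto (fun a => m l (x a)) atTop (𝓝 0))
    -- maximal orthogonal system
    {Γ : Type*} (e : Γ → X)
    (hepos : ∀ γ, 0 ≤ e γ) (hene : ∀ γ, e γ ≠ 0)
    (hedisj : ∀ γ γ', γ ≠ γ' → e γ ⊓ e γ' = 0)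
    (hemax : ∀ x : X, (∀ γ, |x| ⊓ e γ = 0) → x = 0)
    -- band projections onto the bands generated by the `e γ`
    (P : Γ → X →ₗ[ℝ] X)
    (hPproj : ∀ γ x, 0 ≤ x → 0 ≤ P γ x ∧ P γ x ≤ x)
    (hPidem : ∀ γ x, P γ (P γ x) = P γ x)
    (hPabs : ∀ γ x, |P γ x| = P γ |x|)
    (hPband : ∀ γ (x : X), 0 ≤ x →
        IsLUB (Set.range fun n : ℕ => x ⊓ (n • e γ)) (P γ x))
    -- the net
    {α : Type u} [Preorder α] [Nonempty α] [IsDirected α (· ≤ ·)] (x : α → X) :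
    (∀ u : X, 0 ≤ u → ∀ l, Tendsto (fun a => m l (|x a| ⊓ u)) atTop (𝓝 0)) ↔
    (∀ γ, ∀ b : X, 0 ≤ b → P γ b = b →
        ∀ l, Tendsto (fun a => m l (|P γ (x a)| ⊓ b)) atTop (𝓝 0)) := by
  have hm0 : ∀ l, m l (0 : X) = 0 := by
    intro l
    have := hsmul l 0 0
    simpa using this
  have hmneg : ∀ l (z : X), m l (-z) = m l z := by
    intro l z
    have := hsmul l (-1) z
    simpa using this
  have hmnonneg : ∀ l (z : X), 0 ≤ m l z := by
    intro l z
    have h1 : m l (z + (-z)) ≤ m l z + m l (-z) := hadd l z (-z)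
    rw [hmneg l z, add_neg_cancel, hm0 l] at h1
    linarith
  have hmono' : ∀ l (a b : X), 0 ≤ a → a ≤ b → m l a ≤ m l b := fun l a b ha hab =>
    hmono l a b (by rwa [abs_of_nonneg ha, abs_of_nonneg (ha.trans hab)])
  constructor
  · -- forward direction
    intro h γ b hb _ l
    refine squeeze_zero (fun a => hmnonneg l _) (fun a => ?_) (h b hb l)
    refine hmono' l _ _ (le_inf (abs_nonneg _) hb) ?_
    refine inf_le_inf_right b ?_
    rw [hPabs]
    exact (hPproj γ (|x a|) (abs_nonneg _)).2
  · -- backward direction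
    intro h u hu l
    -- monotonicity of P γ
    have hPmono : ∀ γ (z y : X), z ≤ y → P γ z ≤ P γ y := by
      intro γ z y hzy
      have h1 := (hPproj γ (y - z) (sub_nonneg.2 hzy)).1
      rw [map_sub] at h1
      exact sub_nonneg.1 h1
    -- bands are solid / band absorption
    have hband : ∀ γ (z b : X), 0 ≤ z → z ≤ b → P γ b = b → P γ z = z := by
      intro γ z b hz hzb hPb
      have hz' := hPband γ z hz
      have hb' := hPband γ b (hz.trans hzb)
      rw [hPb] at hb'
      have h1 : P γ z ≤ z := hz'.2 (by rintro _ ⟨n, rfl⟩; exact inf_le_left)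
      have h2 : z ≤ P γ z := by
        have hub : (P γ z - z + b) ∈ upperBounds (Set.range fun n : ℕ => b ⊓ n • e γ) := by
          rintro _ ⟨n, rfl⟩
          have h3 : z + (b ⊓ n • e γ) - b ≤ z ⊓ n • e γ := by
            refine le_inf ?_ ?_
            · have : b ⊓ n • e γ ≤ b := inf_le_left
              calc z + (b ⊓ n • e γ) - b ≤ z + b - b := by
                    exact sub_le_sub_right (add_le_add_right this z) b
                _ = z := by abel
            · have h4 : z - b ≤ 0 := sub_nonpos.2 hzb
              calc z + (b ⊓ n • e γ) - b = (b ⊓ n • e γ) + (z - b) := by abel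
                _ ≤ (b ⊓ n • e γ) + 0 := add_le_add_right h4 _
                _ = b ⊓ n • e γ := add_zero _
                _ ≤ n • e γ := inf_le_right
          have h4 : z + (b ⊓ n • e γ) - b ≤ P γ z := h3.trans (hz'.1 ⟨n, rfl⟩)
          calc b ⊓ n • e γ = (z + (b ⊓ n • e γ) - b) + (b - z) := by abel
            _ ≤ P γ z + (b - z) := add_le_add_left h4 _
            _ = P γ z - z + b := by abel
        have h5 : b ≤ P γ z - z + b := hb'.2 hub
        calc z = b + (z - b) := by abel
          _ ≤ (P γ z - z + b) + (z - b) := add_le_add_left h5 _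
          _ = P γ z := by abel
      exact le_antisymm h1 h2
    -- key inequality: y ⊓ b ≤ P γ y ⊓ b for b in the band
    have hkey : ∀ γ (y b : X), 0 ≤ y → 0 ≤ b → P γ b = b → y ⊓ b ≤ P γ y ⊓ b := by
      intro γ y b hy hb hPb
      have hz : P γ (y ⊓ b) = y ⊓ b := hband γ (y ⊓ b) b (le_inf hy hb) inf_le_right hPb
      have hm2 : P γ (y ⊓ b) ≤ P γ y := hPmono γ _ _ inf_le_left
      exact le_inf (hz ▸ hm2) inf_le_right
    -- inf subadditivity
    have hinf_add : ∀ a b c : X, 0 ≤ a → 0 ≤ b → 0 ≤ c → a ⊓ (b + c) ≤ a ⊓ b + a ⊓ c := by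
      intro a b c ha hb hc
      have h1 : a ⊓ (b + c) ≤ (a ⊓ b) + c := by
        calc a ⊓ (b + c) ≤ (a + c) ⊓ (b + c) :=
              inf_le_inf_right _ (le_add_of_nonneg_right hc)
          _ = (a ⊓ b) + c := (inf_add a b c).symm
      have h2 : a ⊓ ((a ⊓ b) + c) = (a ⊓ b) + ((a - (a ⊓ b)) ⊓ c) := by
        rw [add_inf]
        congr 1
        · abel
      calc a ⊓ (b + c) ≤ a ⊓ ((a ⊓ b) + c) := le_inf inf_le_left h1
        _ = (a ⊓ b) + ((a - (a ⊓ b)) ⊓ c) := h2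
        _ ≤ (a ⊓ b) + (a ⊓ c) := by
            refine add_le_add_right (inf_le_inf_right c ?_) _
            exact sub_le_self a (le_inf ha hb)
    -- each P γ u is a "good" component
    have hgood : ∀ γ, ∀ l', Tendsto (fun a => m l' (|x a| ⊓ P γ u)) atTop (𝓝 0) := by
      intro γ l'
      have hb : (0 : X) ≤ P γ u := (hPproj γ u hu).1
      refine squeeze_zero (fun a => hmnonneg l' _) (fun a => ?_)
        (h γ (P γ u) hb (hPidem γ u) l')
      refine hmono' l' _ _ (le_inf (abs_nonneg _) hb) ?_
      rw [hPabs]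
      exact hkey γ (|x a|) (P γ u) (abs_nonneg _) hb (hPidem γ u)
    -- the directed set of good components
    let D := {v : X // 0 ≤ v ∧ v ≤ u ∧
      ∀ l', Tendsto (fun a => m l' (|x a| ⊓ v)) atTop (𝓝 0)}
    haveI : Nonempty D := ⟨⟨0, le_refl _, hu, fun l' => by
      have hz : (fun a => m l' (|x a| ⊓ 0)) = fun _ => 0 := by
        funext a
        rw [inf_of_le_right (abs_nonneg _), hm0]
      rw [hz]
      exact tendsto_const_nhds⟩⟩
    haveI : IsDirected D (· ≤ ·) := by
      constructor
      intro v w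
      refine ⟨⟨v.1 ⊔ w.1, le_trans v.2.1 le_sup_left, sup_le v.2.2.1 w.2.2.1, ?_⟩,
        Subtype.coe_le_coe.1 le_sup_left, Subtype.coe_le_coe.1 le_sup_right⟩
      intro l'
      have hbd : ∀ a, m l' (|x a| ⊓ (v.1 ⊔ w.1)) ≤ m l' (|x a| ⊓ v.1) + m l' (|x a| ⊓ w.1) := by
        intro a
        have h1 : |x a| ⊓ (v.1 ⊔ w.1) ≤ |x a| ⊓ v.1 + |x a| ⊓ w.1 := by
          calc |x a| ⊓ (v.1 ⊔ w.1) ≤ |x a| ⊓ (v.1 + w.1) :=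
                inf_le_inf_left _ (sup_le (le_add_of_nonneg_right w.2.1)
                  (le_add_of_nonneg_left v.2.1))
            _ ≤ _ := hinf_add _ _ _ (abs_nonneg _) v.2.1 w.2.1
        calc m l' (|x a| ⊓ (v.1 ⊔ w.1)) ≤ m l' (|x a| ⊓ v.1 + |x a| ⊓ w.1) :=
              hmono' l' _ _ (le_inf (abs_nonneg _) (le_trans v.2.1 le_sup_left)) h1
          _ ≤ _ := hadd l' _ _
      have hsum := (v.2.2.2 l').add (w.2.2.2 l')
      rw [add_zero] at hsum
      exact squeeze_zero (fun a => hmnonneg l' _) hbd hsum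
    -- u is the least upper bound of D (uses maximality of the orthogonal system)
    have hmaxD : ∀ c : X, (∀ v : D, (v : X) ≤ c) → u ≤ c := by
      intro c hc
      have hd : ∀ γ, (u - u ⊓ c) ⊓ e γ = 0 := by
        intro γ
        have h1 : P γ u ≤ c := hc ⟨P γ u, (hPproj γ u hu).1, (hPproj γ u hu).2, hgood γ⟩
        have h2 : u - u ⊓ c ≤ u - P γ u :=
          sub_le_sub_left (le_inf (hPproj γ u hu).2 h1) u
        have h3 : (u - P γ u) ⊓ e γ ≤ 0 := by
          set t := (u - P γ u) ⊓ e γ with ht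
          have hub2 : (P γ u - t) ∈ upperBounds (Set.range fun n : ℕ => u ⊓ n • e γ) := by
            rintro _ ⟨n, rfl⟩
            have h4 : u ⊓ n • e γ + t ≤ u := by
              have h5 : t ≤ u - P γ u := inf_le_left
              have h6 : u ⊓ n • e γ ≤ P γ u := (hPband γ u hu).1 ⟨n, rfl⟩
              calc u ⊓ n • e γ + t ≤ P γ u + (u - P γ u) := add_le_add h6 h5
                _ = u := by abel
            have h6 : u ⊓ n • e γ + t ≤ (n + 1) • e γ := by
              calc u ⊓ n • e γ + t ≤ n • e γ + e γ := add_le_add inf_le_right inf_le_right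
                _ = (n + 1) • e γ := by rw [add_nsmul, one_nsmul]
            have h7 : u ⊓ n • e γ + t ≤ u ⊓ (n + 1) • e γ := le_inf h4 h6
            have h8 : u ⊓ (n + 1) • e γ ≤ P γ u := (hPband γ u hu).1 ⟨n + 1, rfl⟩
            calc u ⊓ n • e γ = (u ⊓ n • e γ + t) - t := by abel
              _ ≤ P γ u - t := sub_le_sub_right (h7.trans h8) t
          have h9 : P γ u ≤ P γ u - t := (hPband γ u hu).2 hub2
          have h10 : P γ u + t ≤ P γ u := le_sub_iff_add_le.1 h9
          exact (add_le_iff_nonpos_right _).1 h10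
        have h10 : (u - u ⊓ c) ⊓ e γ ≤ 0 := le_trans (inf_le_inf_right _ h2) h3
        have h11 : 0 ≤ (u - u ⊓ c) ⊓ e γ :=
          le_inf (sub_nonneg.2 inf_le_left) (hepos γ)
        exact le_antisymm h10 h11
      have h12 : u - u ⊓ c = 0 := by
        refine hemax _ ?_
        intro γ
        rw [abs_of_nonneg (sub_nonneg.2 inf_le_left)]
        exact hd γ
      have h13 : u = u ⊓ c := sub_eq_zero.1 h12
      calc u = u ⊓ c := h13
        _ ≤ c := inf_le_right
    -- apply the Lebesgue property to the net v ↦ u - v over D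
    have hglb : IsGLB (Set.range fun v : D => u - (v : X)) 0 := by
      constructor
      · rintro _ ⟨v, rfl⟩
        exact sub_nonneg.2 v.2.2.1
      · intro c hcl
        have hcb : ∀ v : D, (v : X) ≤ u - c := by
          intro v
          have h1 : c ≤ u - (v : X) := hcl ⟨v, rfl⟩
          calc (v : X) = u - (u - (v : X)) := by abel
            _ ≤ u - c := sub_le_sub_left h1 u
        have h2 : u ≤ u - c := hmaxD (u - c) hcb
        have h3 : u + c ≤ u := le_sub_iff_add_le.1 h2
        exact (add_le_iff_nonpos_right _).1 h3
    have hLten := hLeb D (fun v => u - (v : X))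
      (fun v w hvw => sub_le_sub_left (Subtype.coe_le_coe.2 hvw) u) hglb l
    -- conclude via an ε/2 argument
    rw [NormedAddCommGroup.tendsto_nhds_zero]
    intro ε hε
    have hε2 : (0 : ℝ) < ε / 2 := by linarith
    obtain ⟨v₀, hv₀⟩ : ∃ v₀ : D, m l (u - (v₀ : X)) < ε / 2 :=
      (hLten.eventually (gt_mem_nhds hε2)).exists
    have hv₀t := (v₀.2.2.2 l).eventually (gt_mem_nhds hε2)
    filter_upwards [hv₀t] with a ha
    have hle : m l (|x a| ⊓ u) ≤ m l (|x a| ⊓ v₀.1) + m l (u - v₀.1) := by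
      have h1 : |x a| ⊓ u ≤ |x a| ⊓ v₀.1 + (u - v₀.1) := by
        calc |x a| ⊓ u = |x a| ⊓ (v₀.1 + (u - v₀.1)) := by rw [add_sub_cancel]
          _ ≤ |x a| ⊓ v₀.1 + |x a| ⊓ (u - v₀.1) :=
            hinf_add _ _ _ (abs_nonneg _) v₀.2.1 (sub_nonneg.2 v₀.2.2.1)
          _ ≤ |x a| ⊓ v₀.1 + (u - v₀.1) := add_le_add_right inf_le_right _
      calc m l (|x a| ⊓ u) ≤ m l (|x a| ⊓ v₀.1 + (u - v₀.1)) :=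
            hmono' l _ _ (le_inf (abs_nonneg _) hu) h1
        _ ≤ _ := hadd l _ _
    rw [Real.norm_eq_abs, abs_of_nonneg (hmnonneg l _)]
    calc m l (|x a| ⊓ u) ≤ m l (|x a| ⊓ v₀.1) + m l (u - v₀.1) := hle
      _ < ε / 2 + ε / 2 := add_lt_add ha hv₀
      _ = ε := by ring
end

section
/- Let (X, M) be a multi-normed vector lattice. If every m-bounded and um-closed subset of X is um-compact, then every order interval [a,b] in X is m-compact (compact in the m-topology). -/
open Filter Topology

/-- The m-topology generated by a family of lattice seminorms. -/
def mTop {X : Type*} [AddCommGroup X] [Lattice X] {Λ : Type*} (m : Λ → X → ℝ) :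
    TopologicalSpace X :=
  TopologicalSpace.generateFrom
    {s | ∃ (z : X) (ε : ℝ) (l : Λ), 0 < ε ∧ s = {y : X | m l (y - z) < ε}}

/-- The um-topology generated by a family of lattice seminorms. -/
def umTop {X : Type*} [AddCommGroup X] [Lattice X] {Λ : Type*} (m : Λ → X → ℝ) :
    TopologicalSpace X :=
  TopologicalSpace.generateFrom
    {s | ∃ (z : X) (ε : ℝ) (l : Λ) (u : X), 0 < ε ∧ 0 ≤ u ∧
          s = {y : X | m l (|y - z| ⊓ u) < ε}}

/-- In an MNVL, if every m-bounded um-closed subset is um-compact, then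
every order interval `[a, b]` is m-compact. -/
theorem stmt18 {X : Type*} [AddCommGroup X] [Lattice X]
    [CovariantClass X X (· + ·) (· ≤ ·)] [Module ℝ X]
    {Λ : Type*} (m : Λ → X → ℝ)
    (hadd : ∀ l (x y : X), m l (x + y) ≤ m l x + m l y)
    (hsmul : ∀ l (c : ℝ) (x : X), m l (c • x) = |c| * m l x)
    (hmono : ∀ l (x y : X), |x| ≤ |y| → m l x ≤ m l y)
    (hsep : ∀ x : X, (∀ l, m l x = 0) → x = 0)
    (hdir : ∀ l₁ l₂, ∃ l₃, ∀ x : X, m l₁ x ≤ m l₃ x ∧ m l₂ x ≤ m l₃ x)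
    (hcompact : ∀ A : Set X, (∀ l, ∃ M : ℝ, ∀ a ∈ A, m l a ≤ M) →
        @IsClosed X (umTop m) A → @IsCompact X (umTop m) A) :
    ∀ a b : X, @IsCompact X (mTop m) (Set.Icc a b) := by
  -- basic facts about the seminorms
  have mzero : ∀ l, m l (0 : X) = 0 := by
    intro l
    have := hsmul l 0 0
    simpa using this
  have mneg : ∀ l (x : X), m l (-x) = m l x := by
    intro l x
    have := hsmul l (-1) x
    simpa using this
  have mabs : ∀ l (x : X), m l |x| = m l x := by
    intro l x
    exact le_antisymm (hmono l _ _ (le_of_eq (abs_abs x)))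
      (hmono l _ _ (le_of_eq (abs_abs x).symm))
  have mnonneg : ∀ l (x : X), 0 ≤ m l x := by
    intro l x
    have h1 : m l (x + (-x)) ≤ m l x + m l (-x) := hadd l x (-x)
    rw [add_neg_cancel, mzero, mneg] at h1
    linarith
  intro a b
  by_cases hab : a ≤ b
  swap
  · rw [Set.Icc_eq_empty hab]
    exact @isCompact_empty X (mTop m)
  -- Icc a b is m-bounded
  have hbdd : ∀ l, ∃ M : ℝ, ∀ y ∈ Set.Icc a b, m l y ≤ M := by
    intro l
    refine ⟨m l (|a| ⊔ |b|), fun y hy => ?_⟩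
    have h1 : |y| ≤ |a| ⊔ |b| := by
      refine abs_le'.mpr ⟨?_, ?_⟩
      · exact le_trans hy.2 (le_trans (le_abs_self b) le_sup_right)
      · exact le_trans (neg_le_neg_iff.mpr hy.1) (le_trans (neg_le_abs a) le_sup_left)
    have h2 : |y| ≤ |(|a| ⊔ |b|)| := by
      rwa [abs_of_nonneg (le_trans (abs_nonneg a) le_sup_left)]
    calc m l y = m l |y| := (mabs l y).symm
    _ ≤ m l (|a| ⊔ |b|) := hmono l _ _ (by rwa [abs_abs])
  -- Icc a b is um-closed
  have hclosed : @IsClosed X (umTop m) (Set.Icc a b) := by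
    rw [← @isOpen_compl_iff X _ (umTop m)]
    rw [@isOpen_iff_mem_nhds X (umTop m)]
    intro x hx
    -- x ∉ Icc a b
    have hx' : ¬ (a ≤ x) ∨ ¬ (x ≤ b) := by
      by_contra h
      push_neg at h
      exact hx ⟨h.1, h.2⟩
    -- pick the witness w ≥ 0, w ≠ 0 with w ≤ |y - x| for all y ∈ Icc a b
    obtain ⟨w, hw0, hwne, hwle⟩ :
        ∃ w : X, 0 ≤ w ∧ w ≠ 0 ∧ ∀ y ∈ Set.Icc a b, w ≤ |y - x| := by
      rcases hx' with h | h
      · refine ⟨(a - x) ⊔ 0, le_sup_right, ?_, ?_⟩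
        · intro hw
          exact h (by simpa [sub_nonpos] using sup_eq_right.mp hw)
        · intro y hy
          exact sup_le (le_trans (by simpa using sub_le_sub_right hy.1 x) (le_abs_self _))
            (abs_nonneg _)
      · refine ⟨(x - b) ⊔ 0, le_sup_right, ?_, ?_⟩
        · intro hw
          exact h (by simpa [sub_nonpos] using sup_eq_right.mp hw)
        · intro y hy
          refine sup_le (le_trans ?_ (neg_le_abs _)) (abs_nonneg _)
          simpa using sub_le_sub_left hy.2 x
    obtain ⟨l, hl⟩ : ∃ l, m l w ≠ 0 := by
      by_contra h
      push_neg at h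
      exact hwne (hsep w h)
    have hlpos : 0 < m l w := lt_of_le_of_ne (mnonneg l w) (Ne.symm hl)
    -- the basic um-open set around x disjoint from Icc a b
    refine @mem_nhds_iff X (umTop m) x _ |>.mpr
      ⟨{y : X | m l (|y - x| ⊓ w) < m l w}, ?_, ?_, ?_⟩
    · intro y hy hy'
      have h1 : |y - x| ⊓ w = w := inf_eq_right.mpr (hwle y hy')
      rw [Set.mem_setOf_eq, h1] at hy
      exact absurd hy (lt_irrefl _)
    · exact TopologicalSpace.GenerateOpen.basic _ ⟨x, m l w, l, w, hlpos, hw0, rfl⟩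
    · show m l (|x - x| ⊓ w) < m l w
      rw [sub_self, abs_zero, inf_eq_left.mpr hw0, mzero]
      exact hlpos
  -- Icc a b is um-compact
  have hum : @IsCompact X (umTop m) (Set.Icc a b) := hcompact _ hbdd hclosed
  -- key: for x ∈ Icc a b, um-neighborhoods restricted to Icc refine m-neighborhoods
  have key : ∀ x ∈ Set.Icc a b,
      @nhds X (umTop m) x ⊓ 𝓟 (Set.Icc a b) ≤ @nhds X (mTop m) x := by
    intro x hx
    conv_rhs => rw [mTop, TopologicalSpace.nhds_generateFrom]
    refine le_iInf₂ fun s hs => ?_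
    obtain ⟨hxs, z, ε, l, hε, rfl⟩ := hs
    have hxz : m l (x - z) < ε := hxs
    set ε' : ℝ := ε - m l (x - z) with hε'def
    have hε' : 0 < ε' := by simp [hε'def]; linarith
    set u : X := b - a with hu
    have hu0 : (0 : X) ≤ u := sub_nonneg.mpr hab
    have hVnhds : {y : X | m l (|y - x| ⊓ u) < ε'} ∈ @nhds X (umTop m) x := by
      refine @IsOpen.mem_nhds X (umTop m) x _ ?_ ?_
      · exact TopologicalSpace.GenerateOpen.basic _ ⟨x, ε', l, u, hε', hu0, rfl⟩
      · show m l (|x - x| ⊓ u) < ε'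
        rw [sub_self, abs_zero, inf_eq_left.mpr hu0, mzero]
        exact hε'
    rw [le_principal_iff]
    refine mem_of_superset
      (inter_mem (mem_inf_of_left hVnhds) (mem_inf_of_right (mem_principal_self _))) ?_
    rintro y ⟨hy1, hy2⟩
    have habs : |y - x| ≤ u := by
      refine abs_le'.mpr ⟨sub_le_sub hy2.2 hx.1, ?_⟩
      rw [neg_sub]
      exact sub_le_sub hx.2 hy2.1
    have h1 : |y - x| ⊓ u = |y - x| := inf_eq_left.mpr habs
    rw [Set.mem_setOf_eq, h1, mabs] at hy1
    show m l (y - z) < ε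
    have h2 : m l (y - z) ≤ m l (y - x) + m l (x - z) := by
      have := hadd l (y - x) (x - z)
      rwa [sub_add_sub_cancel] at this
    have : m l (y - x) < ε' := hy1
    simp [hε'def] at this
    linarith
  -- conclude m-compactness
  intro f hf hfs
  obtain ⟨x, hx, hcl⟩ := hum hfs
  refine ⟨x, hx, ?_⟩
  have h1 : @nhds X (umTop m) x ⊓ f ≤ @nhds X (mTop m) x ⊓ f := by
    refine le_inf ?_ inf_le_right
    calc @nhds X (umTop m) x ⊓ f
        ≤ @nhds X (umTop m) x ⊓ (𝓟 (Set.Icc a b) ⊓ f) := by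
          refine le_inf inf_le_left (le_inf (le_trans inf_le_right hfs) inf_le_right)
    _ = @nhds X (umTop m) x ⊓ 𝓟 (Set.Icc a b) ⊓ f := by rw [inf_assoc]
    _ ≤ @nhds X (mTop m) x ⊓ f := inf_le_inf_right f (key x hx)
    _ ≤ @nhds X (mTop m) x := inf_le_left
  exact @Filter.neBot_of_le X _ _ hcl h1
end

section
/- Let (X, M) be a multi-normed vector lattice in which every m-bounded um-closed subset is um-compact. Then X has the Levi property: every increasing m-bounded net in X₊ has a supremum in X. -/
open Filter Topology

set_option maxHeartbeats 800000

/-- In an MNVL in which every m-bounded um-closed subset is um-compact,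
`X` has the Levi property: every increasing m-bounded net in `X₊` has a supremum. -/
theorem stmt19 {X : Type u} [AddCommGroup X] [Lattice X]
    [CovariantClass X X (· + ·) (· ≤ ·)] [Module ℝ X]
    {Λ : Type*} (m : Λ → X → ℝ)
    (hadd : ∀ l (x y : X), m l (x + y) ≤ m l x + m l y)
    (hsmul : ∀ l (c : ℝ) (x : X), m l (c • x) = |c| * m l x)
    (hmono : ∀ l (x y : X), |x| ≤ |y| → m l x ≤ m l y)
    (hsep : ∀ x : X, (∀ l, m l x = 0) → x = 0)
    (hdir : ∀ l₁ l₂, ∃ l₃, ∀ x : X, m l₁ x ≤ m l₃ x ∧ m l₂ x ≤ m l₃ x)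
    (hcompact : ∀ A : Set X, (∀ l, ∃ M : ℝ, ∀ a ∈ A, m l a ≤ M) →
        @IsClosed X (umTop m) A → @IsCompact X (umTop m) A) :
    ∀ (α : Type u) [Preorder α] [Nonempty α] [IsDirected α (· ≤ ·)] (x : α → X),
      Monotone x → (∀ a, 0 ≤ x a) → (∀ l, ∃ M : ℝ, ∀ a, m l (x a) ≤ M) →
      ∃ s : X, IsLUB (Set.range x) s := by
  intro α _ _ _ x hmonox hpos hbdd
  classical
  letI : TopologicalSpace X := umTop m
  have hm0 : ∀ l, m l (0 : X) = 0 := by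
    intro l
    have := hsmul l 0 0
    simpa using this
  have hmneg : ∀ l (y : X), m l (-y) = m l y := by
    intro l y
    have := hsmul l (-1) y
    simpa using this
  have hmnn : ∀ l (y : X), 0 ≤ m l y := by
    intro l y
    have h1 := hadd l y (-y)
    rw [add_neg_cancel, hm0 l, hmneg l y] at h1
    linarith
  have hopen : ∀ (z : X) (ε : ℝ) (l : Λ) (u : X), 0 < ε → 0 ≤ u →
      IsOpen {y : X | m l (|y - z| ⊓ u) < ε} := fun z ε l u hε hu =>
    TopologicalSpace.isOpen_generateFrom_of_mem ⟨z, ε, l, u, hε, hu, rfl⟩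
  have hself : ∀ (z : X) (ε : ℝ) (l : Λ) (u : X), 0 < ε → 0 ≤ u →
      z ∈ {y : X | m l (|y - z| ⊓ u) < ε} := by
    intro z ε l u hε hu
    simp only [Set.mem_setOf_eq, sub_self, abs_zero]
    rw [inf_eq_left.mpr hu, hm0]
    exact hε
  -- boundedness of closure
  have hCbdd : ∀ l, ∃ M : ℝ, ∀ y ∈ closure (Set.range x), m l y ≤ M := by
    intro l
    obtain ⟨M, hM⟩ := hbdd l
    refine ⟨M + 1, ?_⟩
    intro y hy
    obtain ⟨w, hw1, hw2⟩ := mem_closure_iff.mp hy _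
      (hopen y 1 l |y| one_pos (abs_nonneg y)) (hself y 1 l |y| one_pos (abs_nonneg y))
    obtain ⟨a, rfl⟩ := hw2
    have hw1' : m l (|x a - y| ⊓ |y|) < 1 := hw1
    have hle : |y| ≤ (|x a - y| ⊓ |y|) + |x a| := by
      have hdist : ((|x a - y| ⊓ |y|) + |x a|) = (|x a - y| + |x a|) ⊓ (|y| + |x a|) :=
        (OrderIso.addRight |x a|).map_inf _ _
      rw [hdist]
      refine le_inf ?_ (le_add_of_nonneg_right (abs_nonneg _))
      calc |y| = |(y - x a) + x a| := by rw [sub_add_cancel]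
        _ ≤ |y - x a| + |x a| := abs_add_le _ _
        _ = |x a - y| + |x a| := by rw [abs_sub_comm]
    have h1 : m l y ≤ m l ((|x a - y| ⊓ |y|) + |x a|) := by
      apply hmono
      exact le_trans hle (le_abs_self _)
    have h2 : m l ((|x a - y| ⊓ |y|) + |x a|) ≤ m l (|x a - y| ⊓ |y|) + m l |x a| :=
      hadd l _ _
    have h3 : m l |x a| = m l (x a) := le_antisymm
      (hmono l _ _ (by rw [abs_abs])) (hmono l _ _ (by rw [abs_abs]))
    have := hM a
    linarith
  have hC : IsCompact (closure (Set.range x)) := hcompact _ hCbdd isClosed_closure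
  haveI : (atTop : Filter α).NeBot := atTop_neBot_iff.mpr ⟨‹_›, ‹_›⟩
  have hFle : Filter.map x atTop ≤ 𝓟 (closure (Set.range x)) := by
    rw [le_principal_iff, mem_map]
    exact univ_mem' fun a => subset_closure (Set.mem_range_self a)
  obtain ⟨s, hsC, hs⟩ := hC hFle
  have key : ∀ (v : X), 0 ≤ v → (∀ b : α, ∃ c : α, b ≤ c ∧
      ∀ a : α, c ≤ a → v ≤ |x a - s|) → v = 0 := by
    intro v hv0 hvle
    apply hsep
    intro l
    by_contra h
    have hε : 0 < m l v := lt_of_le_of_ne (hmnn l v) (Ne.symm h)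
    have hV : {y : X | m l (|y - s| ⊓ v) < m l v} ∈ 𝓝 s :=
      (hopen s (m l v) l v hε hv0).mem_nhds (hself s (m l v) l v hε hv0)
    obtain ⟨b0⟩ := ‹Nonempty α›
    obtain ⟨c, _, hc⟩ := hvle b0
    have hS : x '' Set.Ici c ∈ Filter.map x atTop := by
      rw [mem_map]
      exact mem_of_superset (Ici_mem_atTop c) (Set.subset_preimage_image x _)
    obtain ⟨w, hw1, hw2⟩ := clusterPt_iff_nonempty.mp hs hV hS
    obtain ⟨a, hca, rfl⟩ := hw2
    have hle : v ≤ |x a - s| := hc a hca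
    have hw1' : m l (|x a - s| ⊓ v) < m l v := hw1
    rw [inf_eq_right.mpr hle] at hw1'
    exact absurd hw1' (lt_irrefl _)
  have hub : ∀ b, x b ≤ s := by
    intro b
    have hv : (x b - s) ⊔ 0 = 0 := by
      apply key _ le_sup_right
      intro b'
      obtain ⟨c, hbc, hb'c⟩ := directed_of (· ≤ ·) b b'
      refine ⟨c, hb'c, fun a hca => sup_le ?_ (abs_nonneg _)⟩
      exact le_trans (sub_le_sub_right (hmonox (le_trans hbc hca)) s) (le_abs_self _)
    exact sub_nonpos.mp (sup_eq_right.mp hv)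
  refine ⟨s, fun y hy => ?_, fun b hb => ?_⟩
  · obtain ⟨a, rfl⟩ := hy
    exact hub a
  · have hv : (s - b) ⊔ 0 = 0 := by
      apply key _ le_sup_right
      intro b'
      refine ⟨b', le_refl _, fun a _ => sup_le ?_ (abs_nonneg _)⟩
      calc s - b ≤ s - x a := sub_le_sub_left (hb (Set.mem_range_self a)) s
        _ ≤ |s - x a| := le_abs_self _
        _ = |x a - s| := abs_sub_comm _ _
    exact sub_nonpos.mp (sup_eq_right.mp hv)
end
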